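/- For any mesh function u_h, the d-dimensional Lebesgue measure of ⋃_{x ∈ Ω_h} ∂_h u_h(x) equals the sum over the finitely many x ∈ Ω_h of the Lebesgue measures of the sets ∂_h u_h(x); that is, ω(1,u_h,Ω_h) = Σ_{x ∈ Ω_h} |∂_h u_h(x)|. -/

import Mathlib

open Set MeasureTheory Filter Topology

noncomputable section

abbrev Euc (d : ℕ) := EuclideanSpace ℝ (Fin d)

/-- Subdifferential of `v` at `x` relative to the set `C`. -/
def subdiff {d : ℕ} (C : Set (Euc d)) (v : Euc d → ℝ) (x : Euc d) : Set (Euc d) :=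
  {p | ∀ y ∈ C, v x + (inner ℝ p (y - x) : ℝ) ≤ v y}

/-- `⋃ x ∈ S, subdiff C v x`. -/
def subdiffSet {d : ℕ} (C : Set (Euc d)) (v : Euc d → ℝ) (S : Set (Euc d)) : Set (Euc d) :=
  ⋃ x ∈ S, subdiff C v x

/-- The convex extension `ũ` of `u : Ω → ℝ` (may take the value `+∞`, hence `EReal`). -/
def extFun {d : ℕ} (Ω : Set (Euc d)) (u : Euc d → ℝ) (x : Euc d) : EReal :=
  ⨆ y ∈ Ω, ⨆ q ∈ subdiff Ω u y, ((u y + (inner ℝ q (x - y) : ℝ) : ℝ) : EReal)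

/-- `χ_u(x)`: the subdifferential of the extension `ũ` at `x`. -/
def chiSub {d : ℕ} (Ω : Set (Euc d)) (u : Euc d → ℝ) (x : Euc d) : Set (Euc d) :=
  {p | ∀ z : Euc d, extFun Ω u x + (((inner ℝ p (z - x) : ℝ) : ℝ) : EReal) ≤ extFun Ω u z}

def chiSubSet {d : ℕ} (Ω : Set (Euc d)) (u : Euc d → ℝ) (S : Set (Euc d)) : Set (Euc d) :=
  ⋃ x ∈ S, chiSub Ω u x

/-- The lattice `hℤ^d`. -/
def latt (d : ℕ) (h : ℝ) : Set (Euc d) := {x | ∀ i, ∃ m : ℤ, x i = m * h}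

/-- `Ω_h = Ω ∩ hℤ^d`. -/
def meshΩ {d : ℕ} (Ω : Set (Euc d)) (h : ℝ) : Set (Euc d) := Ω ∩ latt d h

/-- An integer direction `e ∈ ℤ^d` as a vector of `ℝ^d`. -/
def intVec {d : ℕ} (e : Fin d → ℤ) : Euc d :=
  (EuclideanSpace.equiv (Fin d) ℝ).symm (fun i => (e i : ℝ))

/-- `h^e_x = sup { r h : r ∈ [0,1], x + r h e ∈ closure Ω }`. -/
def hev {d : ℕ} (Ω : Set (Euc d)) (h : ℝ) (x : Euc d) (e : Fin d → ℤ) : ℝ :=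
  sSup {t | ∃ r ∈ Icc (0:ℝ) 1, t = r * h ∧ x + (r * h) • intVec e ∈ closure Ω}

/-- The boundary nodes `∂Ω_h` for the direction set `V`. -/
def meshBd {d : ℕ} (Ω : Set (Euc d)) (h : ℝ) (V : Set (Fin d → ℤ)) : Set (Euc d) :=
  {x ∈ frontier Ω | ∃ y ∈ meshΩ Ω h, ∃ e ∈ V, x = y + hev Ω h y e • intVec e}

/-- The convex envelope of `u` with constraints on `N`:
`Γ(u)(x) = sup {L x : L affine, L ≤ u on N}`. -/
def convEnv {d : ℕ} (N : Set (Euc d)) (u : Euc d → ℝ) (x : Euc d) : ℝ :=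
  sSup {t | ∃ (p : Euc d) (c : ℝ),
    (∀ y ∈ N, (inner ℝ p y : ℝ) + c ≤ u y) ∧ t = (inner ℝ p x : ℝ) + c}

/-- The second difference operator `Δ_e u_h (x)`. -/
def deltaE {d : ℕ} (Ω : Set (Euc d)) (h : ℝ) (u : Euc d → ℝ) (e : Fin d → ℤ)
    (x : Euc d) : ℝ :=
  2 / (hev Ω h x e + hev Ω h x (-e)) *
    ((u (x + hev Ω h x e • intVec e) - u x) / hev Ω h x e +
     (u (x + hev Ω h x (-e) • intVec (-e)) - u x) / hev Ω h x (-e))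

/-- Discrete convexity with the full set of directions `e ∈ ℤ^d \ {0}`. -/
def DiscConvex {d : ℕ} (Ω : Set (Euc d)) (h : ℝ) (u : Euc d → ℝ) : Prop :=
  ∀ x ∈ meshΩ Ω h, ∀ e : Fin d → ℤ, e ≠ 0 → 0 ≤ deltaE Ω h u e x


lemma coord_le_norm {d : ℕ} (x : Euc d) (i : Fin d) : |x i| ≤ ‖x‖ := by
  rw [EuclideanSpace.norm_eq]
  have h1 : |x i| = Real.sqrt (‖x i‖ ^ 2) := by
    rw [Real.sqrt_sq_eq_abs, abs_norm, Real.norm_eq_abs]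
  rw [h1]
  apply Real.sqrt_le_sqrt
  exact Finset.single_le_sum (fun j _ => sq_nonneg ‖x j‖) (Finset.mem_univ i)

lemma hyp_zero {d : ℕ} (v : Euc d) (hv : v ≠ 0) (c : ℝ) :
    volume {p : Euc d | (inner ℝ p v : ℝ) = c} = 0 := by
  set K : Submodule ℝ (Euc d) := LinearMap.ker ((innerSL ℝ v : Euc d →L[ℝ] ℝ) : Euc d →ₗ[ℝ] ℝ) with hK
  have hKv : v ∉ K := by
    simp only [hK, LinearMap.mem_ker, ContinuousLinearMap.coe_coe, innerSL_apply_apply]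
    exact fun h => hv (inner_self_eq_zero.mp h)
  have hKtop : K ≠ ⊤ := fun h => hKv (h ▸ Submodule.mem_top)
  set p0 : Euc d := (c / ‖v‖ ^ 2) • v with hp0
  have hvp0 : (inner ℝ p0 v : ℝ) = c := by
    rw [hp0, real_inner_smul_left, real_inner_self_eq_norm_sq, div_mul_cancel₀]
    exact pow_ne_zero 2 (norm_ne_zero_iff.mpr hv)
  have hset : {p : Euc d | (inner ℝ p v : ℝ) = c} = (fun p => p + (-p0)) ⁻¹' (K : Set (Euc d)) := by
    ext p
    simp only [mem_setOf_eq, mem_preimage, SetLike.mem_coe, hK, LinearMap.mem_ker,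
      ContinuousLinearMap.coe_coe, innerSL_apply_apply]
    have e1 : (inner ℝ v (p + -p0) : ℝ) = (inner ℝ p v : ℝ) - c := by
      rw [inner_add_right, inner_neg_right, real_inner_comm p0 v, hvp0, real_inner_comm p v]; ring
    rw [e1]
    constructor <;> intro h' <;> linarith
  rw [hset, measure_preimage_add_right]
  exact Measure.addHaar_submodule volume K hKtop

lemma mesh_finite {d : ℕ} (Ω : Set (Euc d)) (hbd : Bornology.IsBounded Ω)
    (h : ℝ) (hh : 0 < h) : (meshΩ Ω h).Finite := by
  obtain ⟨R, hR⟩ := hbd.subset_closedBall 0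
  set F : Euc d → (Fin d → ℤ) := fun x i => ⌊x i / h⌋ with hF
  have hFval : ∀ x ∈ meshΩ Ω h, ∀ i, (F x i : ℝ) * h = x i := by
    intro x hx i
    obtain ⟨m, hm⟩ := hx.2 i
    have : x i / h = m := by rw [hm]; field_simp
    simp only [hF, this, Int.floor_intCast]
    exact hm.symm
  have hinj : Set.InjOn F (meshΩ Ω h) := by
    intro x hx y hy hxy
    have : ∀ i, x i = y i := by
      intro i
      rw [← hFval x hx i, ← hFval y hy i, hxy]
    exact PiLp.ext this
  have himg : F '' meshΩ Ω h ⊆ Set.pi Set.univ (fun _ : Fin d => Set.Icc (-⌈R / h⌉) ⌈R / h⌉) := by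
    rintro _ ⟨x, hx, rfl⟩
    intro i _
    have hxR : ‖x‖ ≤ R := by
      have := hR hx.1
      rwa [Metric.mem_closedBall, dist_zero_right] at this
    have h1 : |(F x i : ℝ)| * h ≤ R := by
      have := coord_le_norm x i
      rw [← hFval x hx i] at this
      calc |(F x i : ℝ)| * h = |(F x i : ℝ) * h| := by
            rw [abs_mul, abs_of_pos hh]
        _ ≤ ‖x‖ := this
        _ ≤ R := hxR
    have h2 : |(F x i : ℝ)| ≤ R / h := (le_div_iff₀ hh).mpr h1
    have h3 : (|F x i| : ℝ) ≤ (⌈R / h⌉ : ℝ) := by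
      push_cast
      exact h2.trans (Int.le_ceil _)
    have h4 : |F x i| ≤ ⌈R / h⌉ := by exact_mod_cast h3
    exact abs_le.mp h4
  exact Set.Finite.of_finite_image
    ((Set.Finite.pi (fun _ => Set.finite_Icc _ _)).subset himg) hinj

lemma subdiff_closed {d : ℕ} (C : Set (Euc d)) (v : Euc d → ℝ) (x : Euc d) :
    IsClosed (subdiff C v x) := by
  have : subdiff C v x = ⋂ y ∈ C, {p : Euc d | v x + (inner ℝ p (y - x) : ℝ) ≤ v y} := by
    ext p; simp [subdiff]
  rw [this]
  exact isClosed_biInter fun y _ =>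
    isClosed_le (continuous_const.add (continuous_id.inner continuous_const)) continuous_const

/-- `Ω_h` is finite and the Monge–Ampère mass `ω(1,u_h,Ω_h)`, i.e. the Lebesgue
measure of `⋃ x ∈ Ω_h, ∂_h u_h(x)`, equals the sum of the measures `|∂_h u_h(x)|`. -/
theorem statement8 {d : ℕ} (hd : 1 ≤ d) (Ω : Set (Euc d))
    (hne : Ω.Nonempty) (hbd : Bornology.IsBounded Ω) (hop : IsOpen Ω) (hcv : Convex ℝ Ω)
    (h : ℝ) (hh : 0 < h)
    (B : Set (Euc d)) (hBfin : B.Finite) (hBbd : B ⊆ frontier Ω)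
    (u : Euc d → ℝ) :
    (meshΩ Ω h).Finite ∧
    volume (⋃ x ∈ meshΩ Ω h, subdiff (meshΩ Ω h ∪ B) u x) =
      ∑' x : (meshΩ Ω h), volume (subdiff (meshΩ Ω h ∪ B) u (x : Euc d)) := by
  have hfin : (meshΩ Ω h).Finite := mesh_finite Ω hbd h hh
  refine ⟨hfin, ?_⟩
  set C : Set (Euc d) := meshΩ Ω h ∪ B with hC
  apply measure_biUnion₀ hfin.countable
  · intro x hx y hy hxy
    have hxC : x ∈ C := Or.inl hx
    have hyC : y ∈ C := Or.inl hy
    have hsub : subdiff C u x ∩ subdiff C u y ⊆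
        {p : Euc d | (inner ℝ p (y - x) : ℝ) = u y - u x} := by
      rintro p ⟨hpx, hpy⟩
      have h1 := hpx y hyC
      have h2 := hpy x hxC
      have h3 : (inner ℝ p (x - y) : ℝ) = -(inner ℝ p (y - x) : ℝ) := by
        rw [(neg_sub y x).symm, inner_neg_right]
      simp only [mem_setOf_eq]
      linarith
    exact measure_mono_null hsub (hyp_zero (y - x) (sub_ne_zero_of_ne (Ne.symm hxy)) _)
  · intro x _
    exact (subdiff_closed C u x).measurableSet.nullMeasurableSet


end
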